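/- The function x ↦ log((tan x)/x) / log(π²/(π² − 4x²)) is strictly increasing on the open interval (0, π/2). -/

import Mathlib

open Real Set


lemma aux_nonneg (u u' : ℝ → ℝ) (hd : ∀ x, HasDerivAt u (u' x) x) (h0 : u 0 = 0)
    (h' : ∀ x, 0 ≤ x → 0 ≤ u' x) : ∀ x, 0 ≤ x → 0 ≤ u x := by
  intro x hx
  have hm : MonotoneOn u (Ici (0:ℝ)) := by
    apply monotoneOn_of_deriv_nonneg (convex_Ici 0)
      (fun y _ => (hd y).continuousAt.continuousWithinAt)
      (fun y _ => ((hd y).differentiableAt).differentiableWithinAt)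
    intro y hy
    rw [(hd y).deriv]
    exact h' y (le_of_lt (by simpa using hy))
  have := hm (mem_Ici.2 (le_refl (0:ℝ))) (mem_Ici.2 hx) hx
  linarith [h0 ▸ this]

lemma tb_c2ge : ∀ x:ℝ, 0 ≤ x → 0 ≤ Real.cos x - (1 - x^2/2) := by
  apply aux_nonneg _ (fun x => (x) - Real.sin x)
  · intro x
    have h := (Real.hasDerivAt_cos x).sub (((hasDerivAt_pow 2 x).div_const 2).const_sub 1)
    refine h.congr_deriv ?_
    push_cast; ring
  · norm_num
  · intro x hx; linarith [Real.sin_le hx]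

lemma tb_s3ge : ∀ x:ℝ, 0 ≤ x → 0 ≤ Real.sin x - (x - x^3/6) := by
  apply aux_nonneg _ (fun x => Real.cos x - (1 - x^2/2))
  · intro x
    have h := (Real.hasDerivAt_sin x).sub ((hasDerivAt_id' x).sub ((hasDerivAt_pow 3 x).div_const 6))
    refine h.congr_deriv ?_
    push_cast; ring
  · norm_num
  · intro x hx; linarith [tb_c2ge x hx]

lemma tb_c4le : ∀ x:ℝ, 0 ≤ x → 0 ≤ (1 - x^2/2 + x^4/24) - Real.cos x := by
  apply aux_nonneg _ (fun x => Real.sin x - (x - x^3/6))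
  · intro x
    have h := ((((hasDerivAt_pow 2 x).div_const 2).const_sub 1).add ((hasDerivAt_pow 4 x).div_const 24)).sub (Real.hasDerivAt_cos x)
    refine h.congr_deriv ?_
    push_cast; ring
  · norm_num
  · intro x hx; linarith [tb_s3ge x hx]

lemma tb_s5le : ∀ x:ℝ, 0 ≤ x → 0 ≤ (x - x^3/6 + x^5/120) - Real.sin x := by
  apply aux_nonneg _ (fun x => (1 - x^2/2 + x^4/24) - Real.cos x)
  · intro x
    have h := (((hasDerivAt_id' x).sub ((hasDerivAt_pow 3 x).div_const 6)).add ((hasDerivAt_pow 5 x).div_const 120)).sub (Real.hasDerivAt_sin x)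
    refine h.congr_deriv ?_
    push_cast; ring
  · norm_num
  · intro x hx; linarith [tb_c4le x hx]

lemma tb_c6ge : ∀ x:ℝ, 0 ≤ x → 0 ≤ Real.cos x - (1 - x^2/2 + x^4/24 - x^6/720) := by
  apply aux_nonneg _ (fun x => (x - x^3/6 + x^5/120) - Real.sin x)
  · intro x
    have h := (Real.hasDerivAt_cos x).sub (((((hasDerivAt_pow 2 x).div_const 2).const_sub 1).add ((hasDerivAt_pow 4 x).div_const 24)).sub ((hasDerivAt_pow 6 x).div_const 720))
    refine h.congr_deriv ?_
    push_cast; ring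
  · norm_num
  · intro x hx; linarith [tb_s5le x hx]

lemma tb_s7ge : ∀ x:ℝ, 0 ≤ x → 0 ≤ Real.sin x - (x - x^3/6 + x^5/120 - x^7/5040) := by
  apply aux_nonneg _ (fun x => Real.cos x - (1 - x^2/2 + x^4/24 - x^6/720))
  · intro x
    have h := (Real.hasDerivAt_sin x).sub ((((hasDerivAt_id' x).sub ((hasDerivAt_pow 3 x).div_const 6)).add ((hasDerivAt_pow 5 x).div_const 120)).sub ((hasDerivAt_pow 7 x).div_const 5040))
    refine h.congr_deriv ?_
    push_cast; ring
  · norm_num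
  · intro x hx; linarith [tb_c6ge x hx]

lemma tb_c8le : ∀ x:ℝ, 0 ≤ x → 0 ≤ (1 - x^2/2 + x^4/24 - x^6/720 + x^8/40320) - Real.cos x := by
  apply aux_nonneg _ (fun x => Real.sin x - (x - x^3/6 + x^5/120 - x^7/5040))
  · intro x
    have h := ((((((hasDerivAt_pow 2 x).div_const 2).const_sub 1).add ((hasDerivAt_pow 4 x).div_const 24)).sub ((hasDerivAt_pow 6 x).div_const 720)).add ((hasDerivAt_pow 8 x).div_const 40320)).sub (Real.hasDerivAt_cos x)
    refine h.congr_deriv ?_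
    push_cast; ring
  · norm_num
  · intro x hx; linarith [tb_s7ge x hx]

lemma tb_s9le : ∀ x:ℝ, 0 ≤ x → 0 ≤ (x - x^3/6 + x^5/120 - x^7/5040 + x^9/362880) - Real.sin x := by
  apply aux_nonneg _ (fun x => (1 - x^2/2 + x^4/24 - x^6/720 + x^8/40320) - Real.cos x)
  · intro x
    have h := (((((hasDerivAt_id' x).sub ((hasDerivAt_pow 3 x).div_const 6)).add ((hasDerivAt_pow 5 x).div_const 120)).sub ((hasDerivAt_pow 7 x).div_const 5040)).add ((hasDerivAt_pow 9 x).div_const 362880)).sub (Real.hasDerivAt_sin x)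
    refine h.congr_deriv ?_
    push_cast; ring
  · norm_num
  · intro x hx; linarith [tb_c8le x hx]

lemma tb_c10ge : ∀ x:ℝ, 0 ≤ x → 0 ≤ Real.cos x - (1 - x^2/2 + x^4/24 - x^6/720 + x^8/40320 - x^10/3628800) := by
  apply aux_nonneg _ (fun x => (x - x^3/6 + x^5/120 - x^7/5040 + x^9/362880) - Real.sin x)
  · intro x
    have h := (Real.hasDerivAt_cos x).sub (((((((hasDerivAt_pow 2 x).div_const 2).const_sub 1).add ((hasDerivAt_pow 4 x).div_const 24)).sub ((hasDerivAt_pow 6 x).div_const 720)).add ((hasDerivAt_pow 8 x).div_const 40320)).sub ((hasDerivAt_pow 10 x).div_const 3628800))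
    refine h.congr_deriv ?_
    push_cast; ring
  · norm_num
  · intro x hx; linarith [tb_s9le x hx]

lemma tb_s11ge : ∀ x:ℝ, 0 ≤ x → 0 ≤ Real.sin x - (x - x^3/6 + x^5/120 - x^7/5040 + x^9/362880 - x^11/39916800) := by
  apply aux_nonneg _ (fun x => Real.cos x - (1 - x^2/2 + x^4/24 - x^6/720 + x^8/40320 - x^10/3628800))
  · intro x
    have h := (Real.hasDerivAt_sin x).sub ((((((hasDerivAt_id' x).sub ((hasDerivAt_pow 3 x).div_const 6)).add ((hasDerivAt_pow 5 x).div_const 120)).sub ((hasDerivAt_pow 7 x).div_const 5040)).add ((hasDerivAt_pow 9 x).div_const 362880)).sub ((hasDerivAt_pow 11 x).div_const 39916800))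
    refine h.congr_deriv ?_
    push_cast; ring
  · norm_num
  · intro x hx; linarith [tb_c10ge x hx]

lemma tb_c12le : ∀ x:ℝ, 0 ≤ x → 0 ≤ (1 - x^2/2 + x^4/24 - x^6/720 + x^8/40320 - x^10/3628800 + x^12/479001600) - Real.cos x := by
  apply aux_nonneg _ (fun x => Real.sin x - (x - x^3/6 + x^5/120 - x^7/5040 + x^9/362880 - x^11/39916800))
  · intro x
    have h := ((((((((hasDerivAt_pow 2 x).div_const 2).const_sub 1).add ((hasDerivAt_pow 4 x).div_const 24)).sub ((hasDerivAt_pow 6 x).div_const 720)).add ((hasDerivAt_pow 8 x).div_const 40320)).sub ((hasDerivAt_pow 10 x).div_const 3628800)).add ((hasDerivAt_pow 12 x).div_const 479001600)).sub (Real.hasDerivAt_cos x)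
    refine h.congr_deriv ?_
    push_cast; ring
  · norm_num
  · intro x hx; linarith [tb_s11ge x hx]

lemma polyL (t : ℝ) (h0 : 0 < t) (h2 : t ≤ 2) (q : ℝ) (hq1 : (9.8696002:ℝ) < q) (hq2 : q < 9.8696066) :
    0 < (7*q/180 - 1/3)*t^6 + (1/30 - q/210)*t^8 + (11*q/43200 - 1/840)*t^10
      + (1/45360 - 4*q/467775)*t^12 := by
  have h6 : 0 < t^6 := by positivity
  have hs : t^2 ≤ 4 := by nlinarith
  have hss : 0 < t^2 := by positivity
  have key : 0 < (7*q/180 - 1/3) + (1/30 - q/210)*t^2 + (11*q/43200 - 1/840)*t^4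
      + (1/45360 - 4*q/467775)*t^6 := by
    nlinarith [sq_nonneg (t^2-4), sq_nonneg t, mul_nonneg (sub_nonneg.2 hs) (le_of_lt hss),
      mul_nonneg (mul_nonneg (sub_nonneg.2 hs) (le_of_lt hss)) (le_of_lt hss), sq_nonneg (t^3)]
  nlinarith [key, h6]

lemma polyR (e : ℝ) (h0 : 0 < e) (h2 : e ≤ 1.15) (p : ℝ) (hp1 : (3.141592:ℝ) < p) (hp2 : p < 3.141593) :
    0 < p^2 + (p - 2*p^3/3)*e + (7*p^2/6)*e^2 + (p^3/15 - 3*p/2)*e^3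
      + (1/3 - 31*p^2/360)*e^4 + (17*p/120 - p^3/360)*e^5
      + (p^2/1680 - 1/30)*e^6 - (p/180)*e^7 + e^8/720 := by
  have hp0 : (0:ℝ) < p := by linarith
  have q1 : (9.8696002:ℝ) < p^2 := by nlinarith
  have q2 : p^2 < 9.8696066 := by nlinarith
  have c2 : (31.006257:ℝ) < p^3 := by nlinarith [mul_lt_mul_of_pos_left q1 hp0]
  have c1 : p^3 < 31.006287 := by nlinarith [mul_lt_mul_of_pos_left q2 hp0]
  have e4 : e^4 ≤ 1.15*e^3 := by nlinarith [pow_pos h0 3]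
  have e5 : (0:ℝ) ≤ e^5 := by positivity
  have e6 : e^6 ≤ (1.15)^3*e^3 := by nlinarith [pow_pos h0 3, sq_nonneg e, pow_pos h0 2]
  have e7 : e^7 ≤ (1.15)^4*e^3 := by nlinarith [pow_pos h0 3, pow_pos h0 4]
  have e8 : (0:ℝ) ≤ e^8 := by positivity
  nlinarith [sq_nonneg (e - 1.15), mul_pos h0 h0, pow_pos h0 3, sq_nonneg e,
    mul_nonneg (mul_nonneg h0.le h0.le) h0.le, sq_nonneg (e-1), sq_nonneg (e*(e-1.15)), sq_nonneg (e*(e-1))]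

lemma P_pos_left (t : ℝ) (h0 : 0 < t) (htp : t < π) (hc : t ≤ 2) :
    0 < 2*π^2*(Real.sin t)^2 - t*(π^2+t^2)*Real.sin t - t^2*(π^2-t^2)*Real.cos t := by
  have hpi1 := Real.pi_gt_d6
  have hpi2 := Real.pi_lt_d6
  have hq1 : (9.8696002:ℝ) < π^2 := by nlinarith
  have hq2 : π^2 < 9.8696066 := by nlinarith
  have hs2 : Real.sin t ^ 2 = 1/2 - Real.cos (2*t)/2 := Real.sin_sq_eq_half_sub t
  have hq := polyL t h0 hc (π^2) hq1 hq2
  have b1 := tb_c12le (2*t) (by linarith)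
  have b2 := tb_s9le t h0.le
  have b3 := tb_c8le t h0.le
  have k2 : (0:ℝ) < t*(π^2+t^2) := by positivity
  have k3 : (0:ℝ) < t^2*(π^2-t^2) := by
    have h2 : (0:ℝ) < π^2 - t^2 := by nlinarith
    positivity
  have m1 : π^2 * Real.cos (2*t) ≤ π^2 * (1 - (2*t)^2/2 + (2*t)^4/24 - (2*t)^6/720 + (2*t)^8/40320 - (2*t)^10/3628800 + (2*t)^12/479001600) :=
    mul_le_mul_of_nonneg_left (by linarith) (sq_nonneg π)
  have m2 : t*(π^2+t^2)*Real.sin t ≤ t*(π^2+t^2)*(t - t^3/6 + t^5/120 - t^7/5040 + t^9/362880) :=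
    mul_le_mul_of_nonneg_left (by linarith) k2.le
  have m3 : t^2*(π^2-t^2)*Real.cos t ≤ t^2*(π^2-t^2)*(1 - t^2/2 + t^4/24 - t^6/720 + t^8/40320) :=
    mul_le_mul_of_nonneg_left (by linarith) k3.le
  rw [hs2]
  linarith [hq, m1, m2, m3]

lemma P_pos_right (t : ℝ) (h0 : 0 < t) (htp : t < π) (hc : 2 < t) :
    0 < 2*π^2*(Real.sin t)^2 - t*(π^2+t^2)*Real.sin t - t^2*(π^2-t^2)*Real.cos t := by
  have hpi1 := Real.pi_gt_d6
  have hpi2 := Real.pi_lt_d6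
  have hs2 : Real.sin t ^ 2 = 1/2 - Real.cos (2*t)/2 := Real.sin_sq_eq_half_sub t
  set e := π - t with he
  have he0 : 0 < e := by simp only [he]; linarith
  have he1 : e ≤ 1.15 := by simp only [he]; nlinarith
  have ht : t = π - e := by rw [he]; ring
  have hsin : Real.sin t = Real.sin e := by rw [ht, Real.sin_pi_sub]
  have hcos : Real.cos t = -Real.cos e := by rw [ht, Real.cos_pi_sub]
  have hcos2 : Real.cos (2*t) = Real.cos (2*e) := by
    rw [ht, show 2*(π-e) = 2*π - 2*e by ring, Real.cos_two_pi_sub]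
  have hq := polyR e he0 he1 π hpi1 hpi2
  have hq2 : 0 < e^2 * (π^2 + (π - 2*π^3/3)*e + (7*π^2/6)*e^2 + (π^3/15 - 3*π/2)*e^3
      + (1/3 - 31*π^2/360)*e^4 + (17*π/120 - π^3/360)*e^5
      + (π^2/1680 - 1/30)*e^6 - (π/180)*e^7 + e^8/720) := mul_pos (pow_pos he0 2) hq
  have b1 := tb_c8le (2*e) (by linarith)
  have b2 := tb_s5le e he0.le
  have b3 := tb_c6ge e he0.le
  have k2 : (0:ℝ) < t*(π^2+t^2) := by positivity
  have k3 : (0:ℝ) < t^2*(π^2-t^2) := by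
    have h2 : (0:ℝ) < π^2 - t^2 := by nlinarith
    positivity
  have m1 : π^2 * Real.cos (2*e) ≤ π^2 * (1 - (2*e)^2/2 + (2*e)^4/24 - (2*e)^6/720 + (2*e)^8/40320) :=
    mul_le_mul_of_nonneg_left (by linarith) (sq_nonneg π)
  have m2 : t*(π^2+t^2)*Real.sin e ≤ t*(π^2+t^2)*(e - e^3/6 + e^5/120) :=
    mul_le_mul_of_nonneg_left (by linarith) k2.le
  have m3 : t^2*(π^2-t^2)*(1 - e^2/2 + e^4/24 - e^6/720) ≤ t^2*(π^2-t^2)*Real.cos e :=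
    mul_le_mul_of_nonneg_left (by linarith) k3.le
  rw [hs2, hsin, hcos, hcos2]
  clear_value e
  subst ht
  linarith [hq2, m1, m2, m3]

lemma P_pos (t : ℝ) (h0 : 0 < t) (htp : t < π) :
    0 < 2*π^2*(Real.sin t)^2 - t*(π^2+t^2)*Real.sin t - t^2*(π^2-t^2)*Real.cos t := by
  rcases le_or_gt t 2 with hc | hc
  · exact P_pos_left t h0 htp hc
  · exact P_pos_right t h0 htp hc

lemma h_mono : StrictMonoOn (fun t : ℝ => ((π^2-t^2)*(t-Real.sin t))/(2*t^2*Real.sin t)) (Ioo 0 π) := by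
  apply strictMonoOn_of_deriv_pos (convex_Ioo 0 π)
  · apply ContinuousOn.div
    · exact (Continuous.continuousOn (by continuity))
    · exact (Continuous.continuousOn (by continuity))
    · intro t ht
      have hs := Real.sin_pos_of_pos_of_lt_pi ht.1 ht.2
      have h0 := ht.1
      positivity
  · intro t ht
    rw [interior_Ioo] at ht
    obtain ⟨h0, hp⟩ := ht
    have hs := Real.sin_pos_of_pos_of_lt_pi h0 hp
    have hD : (2*t^2*Real.sin t) ≠ 0 := by positivity
    have hN : HasDerivAt (fun t : ℝ => (π^2-t^2)*(t-Real.sin t))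
        ((-(2*t))*(t-Real.sin t) + (π^2-t^2)*(1-Real.cos t)) t := by
      have h1 : HasDerivAt (fun t : ℝ => π^2-t^2) (-(2*t)) t := by
        have := (hasDerivAt_pow 2 t).const_sub (π^2)
        refine this.congr_deriv ?_
        push_cast; ring
      have h2 : HasDerivAt (fun t : ℝ => t-Real.sin t) (1-Real.cos t) t :=
        (hasDerivAt_id' t).sub (Real.hasDerivAt_sin t)
      exact h1.mul h2
    have hDd : HasDerivAt (fun t : ℝ => 2*t^2*Real.sin t) (4*t*Real.sin t + 2*t^2*Real.cos t) t := by
      have h1 : HasDerivAt (fun t : ℝ => 2*t^2) (4*t) t := by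
        have := (hasDerivAt_pow 2 t).const_mul (2:ℝ)
        refine this.congr_deriv ?_
        push_cast; ring
      exact h1.mul (Real.hasDerivAt_sin t)
    have hQ := hN.fun_div hDd hD
    rw [hQ.deriv]
    apply div_pos
    · have hP := P_pos t h0 hp
      have hid : ((-(2*t))*(t-Real.sin t) + (π^2-t^2)*(1-Real.cos t)) * (2*t^2*Real.sin t)
          - ((π^2-t^2)*(t-Real.sin t)) * (4*t*Real.sin t + 2*t^2*Real.cos t)
          = 2*t*(2*π^2*(Real.sin t)^2 - t*(π^2+t^2)*Real.sin t - t^2*(π^2-t^2)*Real.cos t) := by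
        ring
      rw [hid]
      have : (0:ℝ) < 2*t := by linarith
      exact mul_pos this hP
    · positivity
noncomputable def hfun (t : ℝ) : ℝ := ((π^2-t^2)*(t-Real.sin t))/(2*t^2*Real.sin t)


lemma pi_gt2 : (2:ℝ) < π := by linarith [Real.pi_gt_d6]

lemma f_hasDeriv (x : ℝ) (hx : x ∈ Ioo 0 (π/2)) :
    HasDerivAt (fun y : ℝ => Real.log (Real.tan y / y)) (1/(Real.sin x*Real.cos x) - 1/x) x := by
  obtain ⟨h0, h2⟩ := hx
  have hc : 0 < Real.cos x := Real.cos_pos_of_mem_Ioo ⟨by linarith, h2⟩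
  have hs : 0 < Real.sin x := Real.sin_pos_of_pos_of_lt_pi h0 (by linarith [pi_gt2])
  have htan : 0 < Real.tan x := Real.tan_pos_of_pos_of_lt_pi_div_two h0 h2
  have hEq : (fun y : ℝ => Real.log (Real.tan y / y)) =ᶠ[nhds x]
      (fun y : ℝ => Real.log (Real.tan y) - Real.log y) := by
    filter_upwards [isOpen_Ioo.mem_nhds (⟨h0, h2⟩ : x ∈ Ioo 0 (π/2))] with y hy
    have : 0 < Real.tan y := Real.tan_pos_of_pos_of_lt_pi_div_two hy.1 hy.2
    rw [Real.log_div this.ne' hy.1.ne']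
  have hd : HasDerivAt (fun y : ℝ => Real.log (Real.tan y) - Real.log y)
      ((1/Real.cos x^2)/Real.tan x - x⁻¹) x :=
    ((Real.hasDerivAt_tan hc.ne').log htan.ne').sub (Real.hasDerivAt_log h0.ne')
  have := hd.congr_of_eventuallyEq hEq
  refine this.congr_deriv ?_
  rw [Real.tan_eq_sin_div_cos]
  field_simp

lemma g_hasDeriv (x : ℝ) (hx : x ∈ Ioo 0 (π/2)) :
    HasDerivAt (fun y : ℝ => Real.log (π^2/(π^2-4*y^2))) (8*x/(π^2-4*x^2)) x := by
  obtain ⟨h0, h2⟩ := hx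
  have hpos : 0 < π^2-4*x^2 := by nlinarith [Real.pi_pos]
  have hEq : (fun y : ℝ => Real.log (π^2/(π^2-4*y^2))) =ᶠ[nhds x]
      (fun y : ℝ => Real.log (π^2) - Real.log (π^2-4*y^2)) := by
    filter_upwards [isOpen_Ioo.mem_nhds (⟨h0, h2⟩ : x ∈ Ioo 0 (π/2))] with y hy
    have hy2 : 0 < π^2-4*y^2 := by nlinarith [Real.pi_pos, hy.1, hy.2]
    rw [Real.log_div (by positivity) hy2.ne']
  have hinner : HasDerivAt (fun y : ℝ => π^2-4*y^2) (-(8*x)) x := by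
    have := ((hasDerivAt_pow 2 x).const_mul (4:ℝ)).const_sub (π^2)
    refine this.congr_deriv ?_
    push_cast; ring
  have hd : HasDerivAt (fun y : ℝ => Real.log (π^2) - Real.log (π^2-4*y^2))
      (0 - (-(8*x))/(π^2-4*x^2)) x :=
    (hasDerivAt_const x (Real.log (π^2))).sub (hinner.log hpos.ne')
  have := hd.congr_of_eventuallyEq hEq
  refine this.congr_deriv ?_
  field_simp
  ring

lemma ratio_eq (x : ℝ) (hx : x ∈ Ioo 0 (π/2)) :
    1/(Real.sin x*Real.cos x) - 1/x = (8*x/(π^2-4*x^2)) * hfun (2*x) := by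
  obtain ⟨h0, h2⟩ := hx
  have hc : 0 < Real.cos x := Real.cos_pos_of_mem_Ioo ⟨by linarith, h2⟩
  have hs : 0 < Real.sin x := Real.sin_pos_of_pos_of_lt_pi h0 (by linarith [pi_gt2])
  have hpos : 0 < π^2-4*x^2 := by nlinarith [Real.pi_pos]
  unfold hfun
  rw [Real.sin_two_mul]
  field_simp [hpos.ne']
  rw [eq_div_iff (ne_of_gt (by linarith))]
  ring

lemma gD_pos (x : ℝ) (hx : x ∈ Ioo 0 (π/2)) : 0 < 8*x/(π^2-4*x^2) := by
  obtain ⟨h0, h2⟩ := hx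
  have hpos : 0 < π^2-4*x^2 := by nlinarith [Real.pi_pos]
  positivity

lemma G_pos (x : ℝ) (hx : x ∈ Ioo 0 (π/2)) : 0 < Real.log (π^2/(π^2-4*x^2)) := by
  obtain ⟨h0, h2⟩ := hx
  have hpos : 0 < π^2-4*x^2 := by nlinarith [Real.pi_pos]
  apply Real.log_pos
  rw [lt_div_iff₀ hpos]
  nlinarith

lemma F_contOn (x : ℝ) (hx : x ∈ Ioo 0 (π/2)) :
    ContinuousOn (fun y : ℝ => Real.log (Real.tan y / y)) (Icc 0 x) := by
  obtain ⟨h0, h2⟩ := hx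
  intro y hy
  rcases eq_or_lt_of_le hy.1 with h | h
  · -- y = 0
    subst h
    rw [← continuousWithinAt_diff_self]
    have htan0 : HasDerivAt Real.tan 1 0 := by
      have := Real.hasDerivAt_tan (x := 0) (by simp)
      simpa using this
    have hslope : Filter.Tendsto (fun y : ℝ => Real.tan y / y) (nhdsWithin 0 {(0:ℝ)}ᶜ) (nhds 1) := by
      have h1 := hasDerivAt_iff_tendsto_slope.1 htan0
      apply h1.congr
      intro z
      simp [slope_def_field, Real.tan_zero]
    have hcomp : Filter.Tendsto (fun y : ℝ => Real.log (Real.tan y / y))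
        (nhdsWithin 0 {(0:ℝ)}ᶜ) (nhds 0) := by
      have hlog : Filter.Tendsto Real.log (nhds 1) (nhds 0) := by
        have := (Real.continuousAt_log one_ne_zero).tendsto
        simpa using this
      exact hlog.comp hslope
    have hsub : Icc (0:ℝ) x \ {0} ⊆ {(0:ℝ)}ᶜ := fun z hz => hz.2
    have : Filter.Tendsto (fun y : ℝ => Real.log (Real.tan y / y))
        (nhdsWithin 0 (Icc (0:ℝ) x \ {0})) (nhds 0) :=
      hcomp.mono_left (nhdsWithin_mono 0 hsub)
    have h00 : (fun y : ℝ => Real.log (Real.tan y / y)) 0 = 0 := by simp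
    unfold ContinuousWithinAt
    rw [h00]
    exact this
  · -- y > 0
    have hy2 : y < π/2 := lt_of_le_of_lt hy.2 h2
    have hc : 0 < Real.cos y := Real.cos_pos_of_mem_Ioo ⟨by linarith, hy2⟩
    have htan : 0 < Real.tan y := Real.tan_pos_of_pos_of_lt_pi_div_two h hy2
    have hq : 0 < Real.tan y / y := div_pos htan h
    apply ContinuousAt.continuousWithinAt
    have hct : ContinuousAt Real.tan y := Real.continuousAt_tan.2 hc.ne'
    exact ContinuousAt.log (hct.div continuousAt_id h.ne') hq.ne'

lemma G_contOn (x : ℝ) (hx : x ∈ Ioo 0 (π/2)) :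
    ContinuousOn (fun y : ℝ => Real.log (π^2/(π^2-4*y^2))) (Icc 0 x) := by
  obtain ⟨h0, h2⟩ := hx
  apply ContinuousOn.log
  · apply ContinuousOn.div continuousOn_const
    · exact Continuous.continuousOn (by continuity)
    · intro y hy
      have : 0 < π^2-4*y^2 := by
        nlinarith [Real.pi_pos, hy.1, lt_of_le_of_lt hy.2 h2]
      exact this.ne'
  · intro y hy
    have h1 : 0 < π^2-4*y^2 := by
      nlinarith [Real.pi_pos, hy.1, lt_of_le_of_lt hy.2 h2]
    positivity

lemma key_lt (x : ℝ) (hx : x ∈ Ioo 0 (π/2)) :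
    ∃ c ∈ Ioo 0 x, Real.log (Real.tan x / x) = Real.log (π^2/(π^2-4*x^2)) * hfun (2*c) := by
  obtain ⟨h0, h2⟩ := hx
  obtain ⟨c, hc, heq⟩ := exists_ratio_hasDerivAt_eq_ratio_slope
    (fun y : ℝ => Real.log (Real.tan y / y)) (fun y : ℝ => 1/(Real.sin y*Real.cos y) - 1/y)
    h0 (F_contOn x ⟨h0, h2⟩)
    (fun y hy => f_hasDeriv y ⟨hy.1, lt_trans hy.2 h2⟩)
    (fun y : ℝ => Real.log (π^2/(π^2-4*y^2))) (fun y : ℝ => 8*y/(π^2-4*y^2))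
    (G_contOn x ⟨h0, h2⟩)
    (fun y hy => g_hasDeriv y ⟨hy.1, lt_trans hy.2 h2⟩)
  refine ⟨c, hc, ?_⟩
  have hcx : c ∈ Ioo 0 (π/2) := ⟨hc.1, lt_trans hc.2 h2⟩
  have hF0 : Real.log (Real.tan 0 / 0) = 0 := by simp
  have hG0 : Real.log (π^2/(π^2-4*(0:ℝ)^2)) = 0 := by
    have : π^2-4*(0:ℝ)^2 = π^2 := by ring
    rw [this, div_self (by positivity), Real.log_one]
  rw [hF0, hG0, sub_zero, sub_zero] at heq
  have hr := ratio_eq c hcx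
  rw [hr] at heq
  have hgd : (8*c/(π^2-4*c^2)) ≠ 0 := (gD_pos c hcx).ne'
  have : Real.log (π^2/(π^2-4*x^2)) * (8*c/(π^2-4*c^2)) * hfun (2*c)
      = Real.log (Real.tan x / x) * (8*c/(π^2-4*c^2)) := by
    rw [← heq]; ring
  have := mul_right_cancel₀ hgd (by linarith [this] : Real.log (π^2/(π^2-4*x^2)) * hfun (2*c) * (8*c/(π^2-4*c^2)) = Real.log (Real.tan x / x) * (8*c/(π^2-4*c^2)))
  linarith [this]

theorem stmt_13 :
    StrictMonoOn
      (fun x : ℝ => Real.log (Real.tan x / x) / Real.log (π ^ 2 / (π ^ 2 - 4 * x ^ 2)))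
      (Set.Ioo 0 (π / 2)) := by
  apply strictMonoOn_of_deriv_pos (convex_Ioo 0 (π/2))
  · apply ContinuousOn.div
    · intro y hy
      exact (f_hasDeriv y hy).continuousAt.continuousWithinAt
    · intro y hy
      exact (g_hasDeriv y hy).continuousAt.continuousWithinAt
    · intro y hy
      exact (G_pos y hy).ne'
  · intro x hx
    rw [interior_Ioo] at hx
    have hF := f_hasDeriv x hx
    have hG := g_hasDeriv x hx
    have hGpos := G_pos x hx
    have hΦ := hF.fun_div hG hGpos.ne'
    rw [hΦ.deriv]
    apply div_pos
    · obtain ⟨c, hc, heq⟩ := key_lt x hx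
      have hcx : c ∈ Ioo 0 (π/2) := ⟨hc.1, lt_trans hc.2 hx.2⟩
      have hrx := ratio_eq x hx
      have hmono : hfun (2*c) < hfun (2*x) := by
        apply h_mono
        · constructor <;> [linarith [hc.1]; linarith [hc.2, hx.2, pi_gt2]]
        · constructor <;> [linarith [hx.1]; linarith [hx.2]]
        · linarith [hc.2]
      have hgd := gD_pos x hx
      calc (0:ℝ) < (8*x/(π^2-4*x^2)) * Real.log (π^2/(π^2-4*x^2)) * (hfun (2*x) - hfun (2*c)) := by
            apply mul_pos (mul_pos hgd hGpos); linarith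
      _ = (1/(Real.sin x*Real.cos x) - 1/x) * Real.log (π^2/(π^2-4*x^2))
            - Real.log (Real.tan x / x) * (8*x/(π^2-4*x^2)) := by
            rw [hrx, heq]; ring
    · positivity
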